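/- Suppose Σ_{j=1}^{N} a_j = Σ_{j=1}^{N} c_j. Then for every n ≥ 1, all real numbers k_1, ..., k_n, and every integer m with 1 ≤ m ≤ n, the pyramidal identity Σ_{i=1}^{2^{m-1}N} x_i^m = Σ_{i=1}^{2^{m-1}N} y_i^m holds, where the first 2^{m-1}N entries of x^{(n)} and y^{(n)} coincide with the entries of x^{(m)} and y^{(m)}. -/

import Mathlib

/-- The pair of sequences `(x^{(t+1)}, y^{(t+1)})` of length `2^t * N` (0-based internal
level `t` corresponds to the paper's level `m = t + 1`) produced by the doubling
construction started from the `N` initial terms `a 0, ..., a (N-1)` and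
`c 0, ..., c (N-1)`.  `(seqXYN N a c k t i).1` is the `i`-th entry (0-based) of
`x^{(t+1)}` and `.2` that of `y^{(t+1)}`. -/
noncomputable def seqXYN (N : ℕ) (a c : ℕ → ℝ) (k : ℕ → ℝ) : ℕ → ℕ → ℝ × ℝ
  | 0, i => (a i + k 1, c i + k 1)
  | t + 1, i =>
      if i < 2 ^ t * N then seqXYN N a c k t i
      else ((seqXYN N a c k t (i - 2 ^ t * N)).2 + k (t + 2),
            (seqXYN N a c k t (i - 2 ^ t * N)).1 + k (t + 2))

/-- `XN N a c k n i` is the entry `x_{i+1}` of the sequence `x^{(n)}` (for `n ≥ 1`,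
`0 ≤ i < 2^(n-1) * N`). -/
noncomputable def XN (N : ℕ) (a c : ℕ → ℝ) (k : ℕ → ℝ) (n i : ℕ) : ℝ :=
  (seqXYN N a c k (n - 1) i).1

/-- `YN N a c k n i` is the entry `y_{i+1}` of the sequence `y^{(n)}` (for `n ≥ 1`,
`0 ≤ i < 2^(n-1) * N`). -/
noncomputable def YN (N : ℕ) (a c : ℕ → ℝ) (k : ℕ → ℝ) (n i : ℕ) : ℝ :=
  (seqXYN N a c k (n - 1) i).2

lemma seqXYN_agree (N : ℕ) (a c k : ℕ → ℝ) (t s i : ℕ) (hi : i < 2 ^ t * N) :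
    seqXYN N a c k (t + s) i = seqXYN N a c k t i := by
  induction s with
  | zero => rfl
  | succ s ih =>
    have h2 : i < 2 ^ (t + s) * N :=
      lt_of_lt_of_le hi (Nat.mul_le_mul_right _ (Nat.pow_le_pow_right (by norm_num)
        (Nat.le_add_right _ _)))
    show seqXYN N a c k ((t + s) + 1) i = _
    rw [seqXYN, if_pos h2, ih]

lemma powsum (N : ℕ) (a c k : ℕ → ℝ)
    (h : ∑ j ∈ Finset.range N, a j = ∑ j ∈ Finset.range N, c j) :
    ∀ t p, p ≤ t + 1 →
    ∑ i ∈ Finset.range (2 ^ t * N), (seqXYN N a c k t i).1 ^ p =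
      ∑ i ∈ Finset.range (2 ^ t * N), (seqXYN N a c k t i).2 ^ p := by
  intro t
  induction t with
  | zero =>
    intro p hp
    interval_cases p
    · simp
    · simp [seqXYN, pow_one, Finset.sum_add_distrib, h]
  | succ t ih =>
    intro p hp
    set M := 2 ^ t * N with hM
    set K := k (t + 2) with hK
    have hsplit : ∀ f : ℕ → ℝ, ∑ i ∈ Finset.range (2 ^ (t + 1) * N), f i =
        ∑ i ∈ Finset.range M, f i + ∑ i ∈ Finset.range M, f (M + i) := by
      intro f
      have h2 : 2 ^ (t + 1) * N = M + M := by rw [hM]; ring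
      rw [h2, Finset.sum_range_add]
    have hx : ∀ i ∈ Finset.range M, (seqXYN N a c k (t + 1) i).1 ^ p =
        (seqXYN N a c k t i).1 ^ p := by
      intro i hi
      rw [seqXYN, if_pos (Finset.mem_range.mp hi)]
    have hy : ∀ i ∈ Finset.range M, (seqXYN N a c k (t + 1) i).2 ^ p =
        (seqXYN N a c k t i).2 ^ p := by
      intro i hi
      rw [seqXYN, if_pos (Finset.mem_range.mp hi)]
    have hx2 : ∀ i ∈ Finset.range M, (seqXYN N a c k (t + 1) (M + i)).1 ^ p =
        ((seqXYN N a c k t i).2 + K) ^ p := by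
      intro i hi
      rw [seqXYN, if_neg (by omega), Nat.add_sub_cancel_left]
    have hy2 : ∀ i ∈ Finset.range M, (seqXYN N a c k (t + 1) (M + i)).2 ^ p =
        ((seqXYN N a c k t i).1 + K) ^ p := by
      intro i hi
      rw [seqXYN, if_neg (by omega), Nat.add_sub_cancel_left]
    rw [hsplit, hsplit, Finset.sum_congr rfl hx, Finset.sum_congr rfl hx2,
      Finset.sum_congr rfl hy, Finset.sum_congr rfl hy2]
    have expand : ∀ g : ℕ → ℝ, ∑ i ∈ Finset.range M, (g i + K) ^ p =
        ∑ j ∈ Finset.range (p + 1),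
          (∑ i ∈ Finset.range M, g i ^ j) * (K ^ (p - j) * (p.choose j : ℝ)) := by
      intro g
      simp_rw [add_pow]
      rw [Finset.sum_comm]
      refine Finset.sum_congr rfl fun j _ => ?_
      rw [Finset.sum_mul]
      exact Finset.sum_congr rfl fun i _ => by ring
    rw [expand (fun i => (seqXYN N a c k t i).2), expand (fun i => (seqXYN N a c k t i).1)]
    rw [Finset.sum_range_succ, Finset.sum_range_succ]
    have hlast : (K ^ (p - p) * (p.choose p : ℝ)) = 1 := by simp
    rw [hlast, mul_one, mul_one]
    have hpre : ∑ j ∈ Finset.range p,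
        (∑ i ∈ Finset.range M, (seqXYN N a c k t i).2 ^ j) * (K ^ (p - j) * (p.choose j : ℝ)) =
        ∑ j ∈ Finset.range p,
        (∑ i ∈ Finset.range M, (seqXYN N a c k t i).1 ^ j) * (K ^ (p - j) * (p.choose j : ℝ)) := by
      refine Finset.sum_congr rfl fun j hj => ?_
      have hj' : j ≤ t + 1 := by
        have := Finset.mem_range.mp hj; omega
      rw [ih j hj']
    rw [hpre]
    ring

theorem pyramidal_system_N (N : ℕ) (hN : 1 ≤ N) (a c : ℕ → ℝ)
    (h : ∑ j ∈ Finset.range N, a j = ∑ j ∈ Finset.range N, c j)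
    (n : ℕ) (hn : 1 ≤ n) (k : ℕ → ℝ) (m : ℕ) (hm1 : 1 ≤ m) (hmn : m ≤ n) :
    ∑ i ∈ Finset.range (2 ^ (m - 1) * N), XN N a c k n i ^ m =
      ∑ i ∈ Finset.range (2 ^ (m - 1) * N), YN N a c k n i ^ m := by
  have hagree : ∀ i ∈ Finset.range (2 ^ (m - 1) * N),
      seqXYN N a c k (n - 1) i = seqXYN N a c k (m - 1) i := by
    intro i hi
    have hn1 : n - 1 = (m - 1) + (n - m) := by omega
    rw [hn1]
    exact seqXYN_agree N a c k (m - 1) (n - m) i (Finset.mem_range.mp hi)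
  unfold XN YN
  have e1 : ∀ i ∈ Finset.range (2 ^ (m - 1) * N),
      (seqXYN N a c k (n - 1) i).1 ^ m = (seqXYN N a c k (m - 1) i).1 ^ m :=
    fun i hi => by rw [hagree i hi]
  have e2 : ∀ i ∈ Finset.range (2 ^ (m - 1) * N),
      (seqXYN N a c k (n - 1) i).2 ^ m = (seqXYN N a c k (m - 1) i).2 ^ m :=
    fun i hi => by rw [hagree i hi]
  rw [Finset.sum_congr rfl e1, Finset.sum_congr rfl e2]
  exact powsum N a c k h (m - 1) m (by omega)
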